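/- Fix ε > 0 and α > 0. Define F(a) = ∫₀^∞ (2η² / (√(η²+1) · (η² + a²)^{ε+1})) · e^{-2α arcsin(a/√(η²+a²))} dη. Then a^{2ε} F(a) converges, as a → +∞, to ∫₀^∞ (2η / (η²+1)^{ε+1}) e^{-2α arcsin(1/√(η²+1))} dη. -/

import Mathlib

open MeasureTheory Filter

private lemma stmt7_bound_integrable (ε : ℝ) (hε : 0 < ε) :
    IntegrableOn (fun u : ℝ => 2 * u / (u ^ 2 + 1) ^ (ε + 1)) (Set.Ioi 0) := by
  have hderiv : ∀ u ∈ Set.Ici (0:ℝ),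
      HasDerivAt (fun u : ℝ => -(1/ε) * (u ^ 2 + 1) ^ (-ε))
        (2 * u / (u ^ 2 + 1) ^ (ε + 1)) u := by
    intro u _
    have h1 : HasDerivAt (fun u : ℝ => u ^ 2 + 1) (2 * u) u := by
      simpa using ((hasDerivAt_pow 2 u).add_const 1)
    have hpos : (0:ℝ) < u ^ 2 + 1 := by positivity
    have h2 := (h1.rpow_const (p := -ε) (Or.inl hpos.ne'))
    have h3 := h2.const_mul (-(1/ε))
    refine h3.congr_deriv ?_
    rw [Real.rpow_sub hpos, Real.rpow_one, Real.rpow_neg hpos.le,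
      Real.rpow_add hpos, Real.rpow_one]
    have h4 : (u ^ 2 + 1) ^ ε ≠ 0 := (Real.rpow_pos_of_pos hpos ε).ne'
    field_simp
  have htend : Tendsto (fun u : ℝ => -(1/ε) * (u ^ 2 + 1) ^ (-ε)) atTop (nhds 0) := by
    have h1 : Tendsto (fun u : ℝ => u ^ 2 + 1) atTop atTop :=
      (tendsto_pow_atTop two_ne_zero).atTop_add tendsto_const_nhds
    have := (tendsto_rpow_neg_atTop hε).comp h1
    simpa using this.const_mul (-(1/ε))
  exact integrableOn_Ioi_deriv_of_nonneg' hderiv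
    (fun x hx => by have hx' : (0:ℝ) < x := hx; positivity) htend

set_option maxHeartbeats 1000000 in
/-- With `F(a) = ∫₀^∞ (2η²/(√(η²+1)(η²+a²)^{ε+1})) e^{-2α arcsin(a/√(η²+a²))} dη`,
one has `a^{2ε} F(a) → ∫₀^∞ (2η/(η²+1)^{ε+1}) e^{-2α arcsin(1/√(η²+1))} dη` as `a → ∞`. -/
theorem stmt7 (ε α : ℝ) (hε : 0 < ε) (hα : 0 < α) :
    Tendsto (fun a : ℝ =>
        a ^ (2 * ε) *
          ∫ η in Set.Ioi (0:ℝ),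
            (2 * η ^ 2 / (Real.sqrt (η ^ 2 + 1) * (η ^ 2 + a ^ 2) ^ (ε + 1))) *
              Real.exp (-2 * α * Real.arcsin (a / Real.sqrt (η ^ 2 + a ^ 2))))
      atTop
      (nhds (∫ η in Set.Ioi (0:ℝ),
        (2 * η / (η ^ 2 + 1) ^ (ε + 1)) *
          Real.exp (-2 * α * Real.arcsin (1 / Real.sqrt (η ^ 2 + 1))))) := by
  set G : ℝ → ℝ → ℝ := fun a u =>
    (a / Real.sqrt (a ^ 2 * u ^ 2 + 1)) * (2 * u ^ 2 / (u ^ 2 + 1) ^ (ε + 1)) *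
      Real.exp (-2 * α * Real.arcsin (1 / Real.sqrt (u ^ 2 + 1))) with hG
  -- Step 1: change of variables
  have key : ∀ a : ℝ, 0 < a →
      a ^ (2 * ε) *
          (∫ η in Set.Ioi (0:ℝ),
            (2 * η ^ 2 / (Real.sqrt (η ^ 2 + 1) * (η ^ 2 + a ^ 2) ^ (ε + 1))) *
              Real.exp (-2 * α * Real.arcsin (a / Real.sqrt (η ^ 2 + a ^ 2)))) =
        ∫ u in Set.Ioi (0:ℝ), G a u := by
    intro a ha
    set f : ℝ → ℝ := fun η =>
      (2 * η ^ 2 / (Real.sqrt (η ^ 2 + 1) * (η ^ 2 + a ^ 2) ^ (ε + 1))) *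
        Real.exp (-2 * α * Real.arcsin (a / Real.sqrt (η ^ 2 + a ^ 2))) with hf
    have hsub := integral_comp_mul_left_Ioi f 0 ha
    rw [mul_zero] at hsub
    have hsub' : (∫ x in Set.Ioi (0:ℝ), f x) = a * ∫ x in Set.Ioi (0:ℝ), f (a * x) := by
      rw [hsub, smul_eq_mul, ← mul_assoc, mul_inv_cancel₀ ha.ne', one_mul]
    show a ^ (2*ε) * (∫ η in Set.Ioi (0:ℝ), f η) = _
    rw [hsub', ← mul_assoc, ← MeasureTheory.integral_const_mul]
    refine setIntegral_congr_fun measurableSet_Ioi (fun u hu => ?_)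
    have hu' : (0:ℝ) < u := hu
    simp only [hf, hG]
    have h1 : (a * u) ^ 2 + a ^ 2 = a ^ 2 * (u ^ 2 + 1) := by ring
    have h2 : Real.sqrt ((a * u) ^ 2 + a ^ 2) = a * Real.sqrt (u ^ 2 + 1) := by
      rw [h1, Real.sqrt_mul (sq_nonneg a), Real.sqrt_sq ha.le]
    have hstrict : (0:ℝ) < u ^ 2 + 1 := by positivity
    have h3 : a / Real.sqrt ((a * u) ^ 2 + a ^ 2) = 1 / Real.sqrt (u ^ 2 + 1) := by
      rw [h2]
      field_simp
    have h4 : ((a * u) ^ 2 + a ^ 2) ^ (ε + 1) =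
        a ^ (2 * (ε + 1)) * (u ^ 2 + 1) ^ (ε + 1) := by
      rw [h1, Real.mul_rpow (sq_nonneg a) hstrict.le, ← Real.rpow_natCast a 2,
        ← Real.rpow_mul ha.le]
      norm_num
    have h5 : a ^ (2 * ε) * a ^ 2 = a ^ (2 * (ε + 1)) := by
      rw [← Real.rpow_natCast a 2, ← Real.rpow_add ha]
      norm_num
      ring_nf
    rw [h3, h4, mul_pow]
    set E := Real.exp (-2 * α * Real.arcsin (1 / Real.sqrt (u ^ 2 + 1))) with hE
    have hS : (0:ℝ) < Real.sqrt (a ^ 2 * u ^ 2 + 1) := Real.sqrt_pos.mpr (by positivity)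
    have hP : (0:ℝ) < (u ^ 2 + 1) ^ (ε + 1) := Real.rpow_pos_of_pos hstrict _
    have hA : (0:ℝ) < a ^ (2 * (ε + 1)) := Real.rpow_pos_of_pos ha _
    field_simp
    linear_combination E * h5
  -- Step 2: dominated convergence for G
  have hmain : Tendsto (fun a : ℝ => ∫ u in Set.Ioi (0:ℝ), G a u) atTop
      (nhds (∫ η in Set.Ioi (0:ℝ),
        (2 * η / (η ^ 2 + 1) ^ (ε + 1)) *
          Real.exp (-2 * α * Real.arcsin (1 / Real.sqrt (η ^ 2 + 1))))) := by
    apply tendsto_integral_filter_of_dominated_convergence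
      (fun u : ℝ => 2 * u / (u ^ 2 + 1) ^ (ε + 1))
    · -- measurability
      filter_upwards [eventually_gt_atTop (0:ℝ)] with a ha
      apply Continuous.aestronglyMeasurable
      apply Continuous.mul
      apply Continuous.mul
      · exact continuous_const.div
          (by fun_prop)
          (fun u => (Real.sqrt_pos.mpr (by positivity)).ne')
      · exact Continuous.div (by fun_prop)
          (by fun_prop (disch := intros; positivity))
          (fun u => (Real.rpow_pos_of_pos (by positivity) _).ne')
      · apply Real.continuous_exp.comp
        apply Continuous.mul continuous_const
        apply Real.continuous_arcsin.comp
        exact continuous_const.div (by fun_prop)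
          (fun u => (Real.sqrt_pos.mpr (by positivity)).ne')
    · -- bound
      filter_upwards [eventually_gt_atTop (0:ℝ)] with a ha
      rw [ae_restrict_iff' measurableSet_Ioi]
      filter_upwards with u hu
      have hu' : (0:ℝ) < u := hu
      have hstrict : (0:ℝ) < u ^ 2 + 1 := by positivity
      have hP : (0:ℝ) < (u ^ 2 + 1) ^ (ε + 1) := Real.rpow_pos_of_pos hstrict _
      have hS : (0:ℝ) < Real.sqrt (a ^ 2 * u ^ 2 + 1) := Real.sqrt_pos.mpr (by positivity)
      have hexp : Real.exp (-2 * α * Real.arcsin (1 / Real.sqrt (u ^ 2 + 1))) ≤ 1 := by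
        apply Real.exp_le_one_iff.mpr
        have harc : 0 ≤ Real.arcsin (1 / Real.sqrt (u ^ 2 + 1)) :=
          Real.arcsin_nonneg.mpr (by positivity)
        nlinarith
      have hfrac : a / Real.sqrt (a ^ 2 * u ^ 2 + 1) ≤ 1 / u := by
        rw [div_le_div_iff₀ hS hu']
        have : a * u = Real.sqrt (a ^ 2 * u ^ 2) := by
          rw [show a^2*u^2 = (a*u)^2 by ring, Real.sqrt_sq (by positivity)]
        rw [this, one_mul]
        exact Real.sqrt_le_sqrt (by linarith)
      have hGnn : 0 ≤ G a u := by
        simp only [hG]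
        have := Real.exp_pos (-2 * α * Real.arcsin (1 / Real.sqrt (u ^ 2 + 1)))
        positivity
      rw [Real.norm_eq_abs, abs_of_nonneg hGnn]
      simp only [hG]
      calc (a / Real.sqrt (a ^ 2 * u ^ 2 + 1)) * (2 * u ^ 2 / (u ^ 2 + 1) ^ (ε + 1)) *
            Real.exp (-2 * α * Real.arcsin (1 / Real.sqrt (u ^ 2 + 1)))
          ≤ (1 / u) * (2 * u ^ 2 / (u ^ 2 + 1) ^ (ε + 1)) * 1 := by
            apply mul_le_mul
            · apply mul_le_mul_of_nonneg_right hfrac (by positivity)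
            · exact hexp
            · exact (Real.exp_pos _).le
            · positivity
        _ = 2 * u / (u ^ 2 + 1) ^ (ε + 1) := by field_simp
    · exact stmt7_bound_integrable ε hε
    · -- pointwise limit
      rw [ae_restrict_iff' measurableSet_Ioi]
      filter_upwards with u hu
      have hu' : (0:ℝ) < u := hu
      have hfrac : Tendsto (fun a : ℝ => a / Real.sqrt (a ^ 2 * u ^ 2 + 1)) atTop
          (nhds (1 / u)) := by
        have heq : ∀ᶠ a : ℝ in atTop, a / Real.sqrt (a ^ 2 * u ^ 2 + 1) =
            1 / Real.sqrt (u ^ 2 + (a ^ 2)⁻¹) := by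
          filter_upwards [eventually_gt_atTop (0:ℝ)] with a ha
          have h1 : a ^ 2 * u ^ 2 + 1 = a ^ 2 * (u ^ 2 + (a ^ 2)⁻¹) := by
            rw [mul_add, mul_inv_cancel₀ (pow_ne_zero 2 ha.ne')]
          rw [h1, Real.sqrt_mul (sq_nonneg a), Real.sqrt_sq ha.le]
          field_simp
        rw [tendsto_congr' heq]
        have h2 : Tendsto (fun a : ℝ => (a ^ 2)⁻¹) atTop (nhds 0) :=
          tendsto_inv_atTop_zero.comp (tendsto_pow_atTop two_ne_zero)
        have h3 : Tendsto (fun a : ℝ => u ^ 2 + (a ^ 2)⁻¹) atTop (nhds (u ^ 2)) := by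
          simpa using tendsto_const_nhds.add h2
        have h4 : Tendsto (fun a : ℝ => Real.sqrt (u ^ 2 + (a ^ 2)⁻¹)) atTop
            (nhds u) := by
          have := (Real.continuous_sqrt.tendsto (u ^ 2)).comp h3
          simpa [Function.comp_def, Real.sqrt_sq hu'.le] using this
        exact tendsto_const_nhds.div h4 hu'.ne'
      have : Tendsto (fun a : ℝ => G a u) atTop
          (nhds ((1/u) * (2 * u ^ 2 / (u ^ 2 + 1) ^ (ε + 1)) *
            Real.exp (-2 * α * Real.arcsin (1 / Real.sqrt (u ^ 2 + 1))))) := by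
        simp only [hG]
        exact (hfrac.mul_const _).mul_const _
      convert this using 2
      have hP : (0:ℝ) < (u ^ 2 + 1) ^ (ε + 1) :=
        Real.rpow_pos_of_pos (by positivity) _
      field_simp
  -- Step 3: combine
  apply hmain.congr'
  filter_upwards [eventually_gt_atTop (0:ℝ)] with a ha
  exact (key a ha).symm
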